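/- arXiv:1705.07252 — 3 statements merged into one kernel-verified Lean document; each statement's English description precedes it below -/
import Mathlib

section
/- In the near-optimal index argument for the capped-simplex projection: suppose η_1 ≤ ⋯ ≤ η_n are nonnegative with ∑η_i = 1, and define ς_i = ∑_{j ≥ i}(η_j - ν) and Ω_i = ∑_{j < i} η_j. If for some index i* we have ς_{i*} ≥ 0, η_{i*} < ν, and η_{i*}(1 + ς_{i*}/Ω_{i*}) < ν with Ω_{i*} > 0, then ς_{i*+1} > 0 and η_{i*}(1 + ς_{i*+1}/Ω_{i*+1}) < ν. -/
open Finset in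
theorem stmt_8 (n : ℕ) (ν : ℝ) (hν : ν ∈ Set.Ioo (0 : ℝ) 1)
    (η : ℕ → ℝ) (hpos : ∀ i < n, 0 ≤ η i)
    (hsorted : ∀ i j, i ≤ j → j < n → η i ≤ η j)
    (hsum : ∑ i ∈ range n, η i = 1)
    (ς Ω : ℕ → ℝ)
    (hς : ∀ i, ς i = ∑ j ∈ Ico i n, (η j - ν))
    (hΩ : ∀ i, Ω i = ∑ j ∈ range i, η j)
    (istar : ℕ) (histar : istar < n)
    (h1 : 0 ≤ ς istar) (h2 : η istar < ν) (h3 : 0 < Ω istar)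
    (h4 : η istar * (1 + ς istar / Ω istar) < ν) :
    0 < ς (istar + 1) ∧ η istar * (1 + ς (istar + 1) / Ω (istar + 1)) < ν := by
  have hη := hpos istar histar
  have hςrec : ς istar = (η istar - ν) + ς (istar + 1) := by
    rw [hς, hς, Finset.sum_eq_sum_Ico_succ_bot histar]
  have hΩrec : Ω (istar + 1) = Ω istar + η istar := by
    rw [hΩ, hΩ, Finset.sum_range_succ]
  have hΩ' : 0 < Ω (istar + 1) := by linarith
  have hd : ς istar / Ω istar * Ω istar = ς istar :=
    div_mul_cancel₀ _ (ne_of_gt h3)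
  have key : η istar * (Ω istar + ς istar) < ν * Ω istar := by
    nlinarith [mul_lt_mul_of_pos_right h4 h3]
  have hd' : ς (istar + 1) / Ω (istar + 1) * Ω (istar + 1) = ς (istar + 1) :=
    div_mul_cancel₀ _ (ne_of_gt hΩ')
  refine ⟨by linarith, ?_⟩
  refine (mul_lt_mul_iff_left₀ hΩ').mp ?_
  have expand : η istar * (1 + ς (istar + 1) / Ω (istar + 1)) * Ω (istar + 1)
      = η istar * Ω (istar + 1) + η istar * (ς (istar + 1) / Ω (istar + 1) * Ω (istar + 1)) := by
    ring
  rw [expand, hd']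
  nlinarith [key]
end

section
/- Let S ⊆ ℝ^m be a nonempty compact convex subset of the probability simplex contained in the relative interior, H the negative entropy, V the KL Bregman divergence, and let x₂ = argmin_{z ∈ S} { V_{x₁}(z)/τ + γH(z) } for x₁ ∈ S and τ, γ > 0. Then for every u ∈ S: (1/τ)V_{x₁}(u) - (1/τ + γ)V_{x₂}(u) - (1/(2τ))‖x₂ - x₁‖₁² ≥ γH(x₂) - γH(u). -/
open Real Set Filter Topology

noncomputable def klG (t : ℝ) : ℝ := t * Real.log t - t + 1 - 3*(t-1)^2/(2*(t+2))
noncomputable def klG1 (t : ℝ) : ℝ := Real.log t - 3*(t-1)*(t+5)/(2*(t+2)^2)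

lemma klG_hasDeriv {t : ℝ} (ht : 0 < t) : HasDerivAt klG (klG1 t) t := by
  have hden : 2*(t+2) ≠ 0 := by positivity
  have hnum : HasDerivAt (fun t : ℝ => 3*(t-1)^2) (3*(2*(t-1)^1*1)) t :=
    (((hasDerivAt_id t).sub_const 1).pow 2).const_mul 3
  have hden' : HasDerivAt (fun t : ℝ => 2*(t+2)) (2*1) t :=
    ((hasDerivAt_id t).add_const 2).const_mul 2
  have hdiv := hnum.div hden' hden
  have h := (((Real.hasDerivAt_mul_log ht.ne').sub (hasDerivAt_id t)).add_const 1).sub hdiv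
  refine h.congr_deriv ?_
  unfold klG1
  field_simp
  ring

lemma klG1_hasDeriv {t : ℝ} (ht : 0 < t) : HasDerivAt klG1 (1/t - 27/(t+2)^3) t := by
  have hden : 2*(t+2)^2 ≠ 0 := by positivity
  have hnum : HasDerivAt (fun t : ℝ => 3*((t-1)*(t+5))) (3*(1*(t+5)+(t-1)*1)) t :=
    (((hasDerivAt_id t).sub_const 1).mul ((hasDerivAt_id t).add_const 5)).const_mul 3
  have hden' : HasDerivAt (fun t : ℝ => 2*(t+2)^2) (2*(2*(t+2)^1*1)) t :=
    (((hasDerivAt_id t).add_const 2).pow 2).const_mul 2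
  have hdiv := hnum.div hden' hden
  have h := (Real.hasDerivAt_log ht.ne').sub hdiv
  have hfun : klG1 = fun t : ℝ => Real.log t - 3*((t-1)*(t+5))/(2*(t+2)^2) := by
    funext s; unfold klG1; ring_nf
  rw [hfun]
  refine h.congr_deriv ?_
  have h2 : t + 2 ≠ 0 := by positivity
  field_simp
  ring

lemma klG1_mono : MonotoneOn klG1 (Set.Ioi (0:ℝ)) := by
  apply monotoneOn_of_hasDerivWithinAt_nonneg (convex_Ioi 0)
    (f' := fun t => 1/t - 27/(t+2)^3)
  · exact fun t ht => (klG1_hasDeriv ht).continuousAt.continuousWithinAt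
  · intro t ht
    rw [interior_Ioi] at ht
    exact (klG1_hasDeriv ht).hasDerivWithinAt
  · intro t ht
    rw [interior_Ioi] at ht
    have ht' : (0:ℝ) < t := ht
    have h1 : (0:ℝ) < (t+2)^3 := by positivity
    rw [sub_nonneg, div_le_div_iff₀ h1 ht']
    nlinarith [mul_nonneg (sq_nonneg (t-1)) (by linarith : (0:ℝ) ≤ t + 8)]

lemma klG_nonneg {t : ℝ} (ht : 0 < t) : 0 ≤ klG t := by
  have hG1one : klG1 1 = 0 := by norm_num [klG1]
  have hGone : klG 1 = 0 := by norm_num [klG]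
  rcases le_total t 1 with h1 | h1
  · have hanti : AntitoneOn klG (Set.Ioc (0:ℝ) 1) := by
      apply antitoneOn_of_hasDerivWithinAt_nonpos (convex_Ioc 0 1) (f' := klG1)
      · exact fun s hs => (klG_hasDeriv hs.1).continuousAt.continuousWithinAt
      · intro s hs
        rw [interior_Ioc] at hs
        exact (klG_hasDeriv hs.1).hasDerivWithinAt
      · intro s hs
        rw [interior_Ioc] at hs
        have := klG1_mono (mem_Ioi.mpr hs.1) (mem_Ioi.mpr one_pos) hs.2.le
        linarith [hG1one]
    have := hanti (⟨ht, h1⟩ : t ∈ Set.Ioc (0:ℝ) 1) ⟨one_pos, le_refl 1⟩ h1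
    linarith
  · have hmono : MonotoneOn klG (Set.Ici (1:ℝ)) := by
      apply monotoneOn_of_hasDerivWithinAt_nonneg (convex_Ici 1) (f' := klG1)
      · exact fun s hs => (klG_hasDeriv (lt_of_lt_of_le one_pos hs)).continuousAt.continuousWithinAt
      · intro s hs
        rw [interior_Ici] at hs
        exact (klG_hasDeriv (lt_trans one_pos hs)).hasDerivWithinAt
      · intro s hs
        rw [interior_Ici] at hs
        have := klG1_mono (mem_Ioi.mpr one_pos) (mem_Ioi.mpr (lt_trans one_pos hs)) hs.le
        linarith [hG1one]
    have := hmono (mem_Ici.mpr (le_refl 1)) (mem_Ici.mpr h1) h1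
    linarith



lemma kl_ptwise {a b : ℝ} (ha : 0 < a) (hb : 0 < b) :
    3*(a-b)^2/(2*(a+2*b)) ≤ a * Real.log (a/b) - a + b := by
  have ht : 0 < a / b := div_pos ha hb
  have h := klG_nonneg ht
  unfold klG at h
  have hw : 0 < a + 2*b := by linarith
  have key : b * (a/b * Real.log (a/b) - a/b + 1 - 3*(a/b-1)^2/(2*(a/b+2)))
      = a * Real.log (a/b) - a + b - 3*(a-b)^2/(2*(a+2*b)) := by
    rw [show a/b + 2 = (a+2*b)/b by field_simp, show a/b - 1 = (a-b)/b by field_simp]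
    field_simp
  nlinarith [mul_nonneg hb.le h]

lemma pinsker_fin (m : ℕ) (p q : Fin m → ℝ) (hp : ∀ i, 0 < p i) (hq : ∀ i, 0 < q i)
    (hps : ∑ i, p i = 1) (hqs : ∑ i, q i = 1) :
    (1/2) * (∑ i, |p i - q i|)^2 ≤ ∑ i, p i * Real.log (p i / q i) := by
  have hw : ∀ i, 0 < p i + 2 * q i := fun i => by nlinarith [hp i, hq i]
  have hcs := Finset.sum_mul_sq_le_sq_mul_sq Finset.univ
    (fun i => |p i - q i| / Real.sqrt (p i + 2*q i)) (fun i => Real.sqrt (p i + 2*q i))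
  have h1 : (∑ i, |p i - q i| / Real.sqrt (p i + 2*q i) * Real.sqrt (p i + 2*q i))
      = ∑ i, |p i - q i| :=
    Finset.sum_congr rfl fun i _ => div_mul_cancel₀ _ (Real.sqrt_ne_zero'.mpr (hw i))
  have h2 : (∑ i, (|p i - q i| / Real.sqrt (p i + 2*q i))^2)
      = ∑ i, (p i - q i)^2 / (p i + 2*q i) :=
    Finset.sum_congr rfl fun i _ => by
      rw [div_pow, sq_abs, Real.sq_sqrt (hw i).le]
  have h3 : (∑ i, (Real.sqrt (p i + 2*q i))^2) = 3 := by
    have : (∑ i, (Real.sqrt (p i + 2*q i))^2) = ∑ i, (p i + 2*q i) :=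
      Finset.sum_congr rfl fun i _ => Real.sq_sqrt (hw i).le
    rw [this, Finset.sum_add_distrib, hps, ← Finset.mul_sum, hqs]
    norm_num
  rw [h1, h2, h3] at hcs
  -- pointwise bound summed
  have hpt : (∑ i, 3*(p i - q i)^2/(2*(p i + 2*q i)))
      ≤ ∑ i, (p i * Real.log (p i / q i) - p i + q i) :=
    Finset.sum_le_sum fun i _ => kl_ptwise (hp i) (hq i)
  have hsum1 : (∑ i, (p i * Real.log (p i / q i) - p i + q i))
      = ∑ i, p i * Real.log (p i / q i) := by
    rw [Finset.sum_add_distrib, Finset.sum_sub_distrib, hps, hqs]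
    ring
  have hsum2 : (∑ i, 3*(p i - q i)^2/(2*(p i + 2*q i)))
      = (3/2) * ∑ i, (p i - q i)^2/(p i + 2*q i) := by
    rw [Finset.mul_sum]
    exact Finset.sum_congr rfl fun i _ => by field_simp
  rw [hsum1, hsum2] at hpt
  nlinarith [hpt, hcs]



theorem stmt_11 (m : ℕ) (S : Set (Fin m → ℝ)) (hSne : S.Nonempty)
    (hScomp : IsCompact S) (hSconv : Convex ℝ S)
    (hSsub : S ⊆ stdSimplex ℝ (Fin m)) (hSpos : ∀ z ∈ S, ∀ i, 0 < z i)
    (τ γ : ℝ) (hτ : 0 < τ) (hγ : 0 < γ)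
    (x₁ : Fin m → ℝ) (hx₁ : x₁ ∈ S)
    (x₂ : Fin m → ℝ) (hx₂ : x₂ ∈ S)
    (hx₂min : ∀ z ∈ S,
      (∑ i, x₂ i * Real.log (x₂ i / x₁ i)) / τ + γ * ∑ i, x₂ i * Real.log (x₂ i)
        ≤ (∑ i, z i * Real.log (z i / x₁ i)) / τ + γ * ∑ i, z i * Real.log (z i)) :
    ∀ u ∈ S,
      γ * (∑ i, x₂ i * Real.log (x₂ i)) - γ * ∑ i, u i * Real.log (u i)
        ≤ (1 / τ) * (∑ i, u i * Real.log (u i / x₁ i))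
          - (1 / τ + γ) * (∑ i, u i * Real.log (u i / x₂ i))
          - (1 / (2 * τ)) * (∑ i, |x₂ i - x₁ i|) ^ 2 := by
  intro u hu
  have hx₂pos : ∀ i, 0 < x₂ i := hSpos x₂ hx₂
  have hx₁pos : ∀ i, 0 < x₁ i := hSpos x₁ hx₁
  have hupos : ∀ i, 0 < u i := hSpos u hu
  have hsu : ∑ i, u i = 1 := (hSsub hu).2
  have hs2 : ∑ i, x₂ i = 1 := (hSsub hx₂).2
  set d : Fin m → ℝ := fun i => u i - x₂ i with hd
  set φ : ℝ → ℝ := fun t => (1/τ+γ) * ∑ i, (x₂ i + t * d i) * Real.log (x₂ i + t * d i)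
      - (1/τ) * ∑ i, (x₂ i + t * d i) * Real.log (x₁ i) with hφ
  set D : ℝ := (1/τ+γ) * (∑ i, (Real.log (x₂ i)+1) * d i)
      - (1/τ) * ∑ i, d i * Real.log (x₁ i) with hDdef
  have ha : ∀ i : Fin m, HasDerivAt (fun t : ℝ => x₂ i + t * d i) (d i) 0 := fun i => by
    simpa using ((hasDerivAt_id (0:ℝ)).mul_const (d i)).const_add (x₂ i)
  have hderiv : HasDerivAt φ D 0 := by
    have key : ∀ i : Fin m, HasDerivAt
        (fun t : ℝ => (x₂ i + t * d i) * Real.log (x₂ i + t * d i))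
        ((Real.log (x₂ i)+1) * d i) 0 := by
      intro i
      have hpos := hx₂pos i
      have hne : x₂ i + 0 * d i ≠ 0 := by simpa using hpos.ne'
      have hlog : HasDerivAt (fun t : ℝ => Real.log (x₂ i + t * d i))
          (d i / (x₂ i + 0 * d i)) 0 := (ha i).log hne
      have h := (ha i).mul hlog
      refine h.congr_deriv ?_
      simp only [zero_mul, add_zero]
      field_simp
    have keylin : ∀ i : Fin m, HasDerivAt
        (fun t : ℝ => (x₂ i + t * d i) * Real.log (x₁ i)) (d i * Real.log (x₁ i)) 0 :=
      fun i => (ha i).mul_const _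
    exact ((HasDerivAt.fun_sum (fun i _ => key i)).const_mul _).sub
      ((HasDerivAt.fun_sum (fun i _ => keylin i)).const_mul _)
  have hFeq : ∀ w : Fin m → ℝ, (∀ i, 0 < w i) →
      (∑ i, w i * Real.log (w i / x₁ i)) / τ + γ * ∑ i, w i * Real.log (w i)
      = (1/τ+γ) * ∑ i, w i * Real.log (w i) - (1/τ) * ∑ i, w i * Real.log (x₁ i) := by
    intro w hw
    have h : ∀ i : Fin m, w i * Real.log (w i / x₁ i)
        = w i * Real.log (w i) - w i * Real.log (x₁ i) :=
      fun i => by rw [Real.log_div (hw i).ne' (hx₁pos i).ne']; ring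
    rw [Finset.sum_congr rfl fun i _ => h i, Finset.sum_sub_distrib]
    ring
  have hmin : ∀ t ∈ Icc (0:ℝ) 1, φ 0 ≤ φ t := by
    intro t ht
    have hzS : (fun i => x₂ i + t * d i) ∈ S := by
      have h := hSconv.add_smul_sub_mem hx₂ hu ht
      convert h using 1
      ext i
      simp [hd]
    have h := hx₂min _ hzS
    rw [hFeq x₂ hx₂pos, hFeq _ (hSpos _ hzS)] at h
    simpa [hφ] using h
  have hD0 : (0:ℝ) ≤ D := by
    have hslope := hasDerivWithinAt_iff_tendsto_slope.mp
      (hderiv.hasDerivWithinAt (s := Ioi 0))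
    haveI : (𝓝[Ioi (0:ℝ) \ {0}] 0).NeBot := by
      rw [diff_singleton_eq_self (by simp)]
      exact nhdsGT_neBot 0
    refine ge_of_tendsto hslope ?_
    filter_upwards [self_mem_nhdsWithin,
      eventually_nhdsWithin_of_eventually_nhds (eventually_lt_nhds zero_lt_one)] with t ht hlt
    have ht0 : (0:ℝ) < t := ht.1
    have := hmin t ⟨ht0.le, hlt.le⟩
    rw [slope_def_field]
    have hnum : 0 ≤ φ t - φ 0 := by linarith
    have hden : (0:ℝ) < t - 0 := by linarith
    exact div_nonneg hnum hden.le
  -- identities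
  set A := ∑ i, u i * Real.log (u i) with hA
  set B := ∑ i, x₂ i * Real.log (x₂ i) with hB
  set C1 := ∑ i, u i * Real.log (x₁ i) with hC1
  set C2 := ∑ i, u i * Real.log (x₂ i) with hC2
  set C3 := ∑ i, x₂ i * Real.log (x₁ i) with hC3
  have hV1u : ∑ i, u i * Real.log (u i / x₁ i) = A - C1 := by
    rw [Finset.sum_congr rfl fun i _ => by
      rw [Real.log_div (hupos i).ne' (hx₁pos i).ne', mul_sub], Finset.sum_sub_distrib]
  have hV2u : ∑ i, u i * Real.log (u i / x₂ i) = A - C2 := by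
    rw [Finset.sum_congr rfl fun i _ => by
      rw [Real.log_div (hupos i).ne' (hx₂pos i).ne', mul_sub], Finset.sum_sub_distrib]
  have hV12 : ∑ i, x₂ i * Real.log (x₂ i / x₁ i) = B - C3 := by
    rw [Finset.sum_congr rfl fun i _ => by
      rw [Real.log_div (hx₂pos i).ne' (hx₁pos i).ne', mul_sub], Finset.sum_sub_distrib]
  have hPin : (1/2) * (∑ i, |x₂ i - x₁ i|)^2 ≤ B - C3 := by
    have h := pinsker_fin m x₂ x₁ hx₂pos hx₁pos hs2 (hSsub hx₁).2
    rw [hV12] at h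
    exact h
  have hDsum1 : ∑ i, (Real.log (x₂ i)+1) * d i = C2 - B := by
    have h : ∀ i : Fin m, (Real.log (x₂ i)+1) * d i
        = (u i * Real.log (x₂ i) - x₂ i * Real.log (x₂ i)) + (u i - x₂ i) := fun i => by
      simp only [hd]; ring
    rw [Finset.sum_congr rfl fun i _ => h i, Finset.sum_add_distrib,
      Finset.sum_sub_distrib, Finset.sum_sub_distrib, hsu, hs2, hC2, hB]
    ring
  have hDsum2 : ∑ i, d i * Real.log (x₁ i) = C1 - C3 := by
    have h : ∀ i : Fin m, d i * Real.log (x₁ i)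
        = u i * Real.log (x₁ i) - x₂ i * Real.log (x₁ i) := fun i => by
      simp only [hd]; ring
    rw [Finset.sum_congr rfl fun i _ => h i, Finset.sum_sub_distrib, hC1, hC3]
  rw [hDdef, hDsum1, hDsum2] at hD0
  rw [hV1u, hV2u]
  have heq : (1/(2*τ)) * (∑ i, |x₂ i - x₁ i|)^2
      = (1/τ) * ((1/2) * (∑ i, |x₂ i - x₁ i|)^2) := by
    field_simp
  have hPin' := mul_le_mul_of_nonneg_left hPin (by positivity : (0:ℝ) ≤ 1/τ)
  rw [heq]
  nlinarith [hD0, hPin']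
end

section
/- Let η* be the minimizer of a strictly convex function over the capped simplex D = {η ∈ Δ_n : 0 ≤ η_i ≤ ν}. If the unconstrained-over-Δ_n minimizer has the multiplicative form η̃_i/Z with η̃_i > 0, and i* is the largest index (after sorting η̃/Z in increasing order) with ς_{i*} := ∑_{j≥i*}(η̃_j/Z − ν) ≥ 0 and (η̃_{i*−1}/Z)(1 + ς_{i*}/Ω_{i*}) < ν where Ω_{i*} = ∑_{j<i*} η̃_j/Z, then the vector η with η_i = (η̃_i/Z)(1 + ς_{i*}/Ω_{i*}) for i < i* and η_i = ν for i ≥ i* satisfies η ∈ D, ∑ η_i = 1, and the KKT conditions of the constrained problem, hence equals η*. -/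
open Finset

lemma xlogx_conv (u v : ℝ) (hu : 0 ≤ u) (hv : 0 < v) :
    v * Real.log v - u * Real.log u ≤ (Real.log v + 1) * (v - u) := by
  rcases eq_or_lt_of_le hu with h | h
  · subst h; simp; nlinarith [hv]
  · have h1 : Real.log (v / u) ≤ v / u - 1 :=
      Real.log_le_sub_one_of_pos (by positivity)
    have h2 : Real.log (v / u) = Real.log v - Real.log u := Real.log_div hv.ne' h.ne'
    have h3 : u * Real.log (v/u) ≤ u * (v/u - 1) :=
      mul_le_mul_of_nonneg_left h1 hu
    have h4 : u * (v/u) = v := by field_simp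
    nlinarith [h3, h2]

set_option maxHeartbeats 1000000 in


open Finset in
/-- Equivalence of Rule 1 and Rule 2 for the ν-Saddle update: the explicit sorted
capped-simplex projection of the multiplicative-form simplex minimizer satisfies the
KKT conditions of the capped-simplex problem, hence equals its minimizer. -/
theorem stmt_14 (n : ℕ) (ν γ τ d : ℝ)
    (hν : ν ∈ Set.Ioc (0 : ℝ) 1) (hnν : 1 ≤ (n : ℝ) * ν)
    (hγ : 0 < γ) (hτ : 0 < τ) (hd : 0 < d)
    (c η₀ : ℕ → ℝ) (hη₀pos : ∀ i < n, 0 < η₀ i)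
    -- the objective function (strictly convex on the capped simplex)
    (F : (ℕ → ℝ) → ℝ)
    (hF : ∀ η, F η = (∑ i ∈ range n, c i * η i)
      + (γ / d) * (∑ i ∈ range n, η i * Real.log (η i))
      + (1 / τ) * ∑ i ∈ range n, η i * Real.log (η i / η₀ i))
    (hFstrict : StrictConvexOn ℝ
      {η : ℕ → ℝ | (∑ i ∈ range n, η i = 1) ∧ ∀ i < n, 0 ≤ η i ∧ η i ≤ ν} F)
    -- the minimizer η* over the capped simplex D
    (ηstar : ℕ → ℝ)
    (hηstarD : (∑ i ∈ range n, ηstar i = 1) ∧ ∀ i < n, 0 ≤ ηstar i ∧ ηstar i ≤ ν)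
    (hηstarmin : ∀ η : ℕ → ℝ,
      (∑ i ∈ range n, η i = 1) → (∀ i < n, 0 ≤ η i ∧ η i ≤ ν) → F ηstar ≤ F η)
    -- the unconstrained-over-Δ_n minimizer has multiplicative form η̃ᵢ/Z,
    -- sorted in increasing order
    (ηt : ℕ → ℝ) (hηtpos : ∀ i < n, 0 < ηt i)
    (Z : ℝ) (hZ : Z = ∑ i ∈ range n, ηt i)
    (hsorted : ∀ i j, i ≤ j → j < n → ηt i ≤ ηt j)
    (hunc : ∀ η : ℕ → ℝ, (∑ i ∈ range n, η i = 1) → (∀ i < n, 0 ≤ η i) →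
      F (fun i => ηt i / Z) ≤ F η)
    -- the quantities ς and Ω and the chosen index i*
    (ς Ωm : ℕ → ℝ)
    (hς : ∀ i, ς i = ∑ j ∈ Ico i n, (ηt j / Z - ν))
    (hΩ : ∀ i, Ωm i = ∑ j ∈ range i, ηt j / Z)
    (istar : ℕ) (histar0 : 0 < istar) (histarn : istar ≤ n)
    (h1 : 0 ≤ ς istar)
    (h2 : (ηt (istar - 1) / Z) * (1 + ς istar / Ωm istar) < ν)
    (hlargest : ∀ j, istar < j → j ≤ n →
      ¬(0 ≤ ς j ∧ (ηt (j - 1) / Z) * (1 + ς j / Ωm j) < ν))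
    -- the explicitly projected vector η
    (η : ℕ → ℝ)
    (hη : ∀ i, η i = if istar ≤ i then ν else (ηt i / Z) * (1 + ς istar / Ωm istar)) :
    -- η is feasible, sums to 1, satisfies the KKT conditions, and equals η*
    (∀ i < n, 0 ≤ η i ∧ η i ≤ ν) ∧
    (∑ i ∈ range n, η i = 1) ∧
    (∃ lam : ℝ, ∃ α : ℕ → ℝ,
      (∀ i < n, 0 ≤ α i) ∧
      (∀ i < n, α i * (η i - ν) = 0) ∧
      (∀ i < n, c i + (γ / d) * (Real.log (η i) + 1)
        + (1 / τ) * (Real.log (η i / η₀ i) + 1) + lam + α i = 0)) ∧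
    (∀ i < n, η i = ηstar i) := by
  obtain ⟨hν0, hν1⟩ := hν
  have hn : 0 < n := by
    by_contra h
    push_neg at h
    interval_cases n
    simp at hnν; linarith
  have hZ0 : 0 < Z := by
    rw [hZ]
    exact Finset.sum_pos (fun i hi => hηtpos i (mem_range.mp hi)) (by simp [hn.ne'])
  set p : ℕ → ℝ := fun i => ηt i / Z with hpdef
  have hp : ∀ i < n, 0 < p i := fun i hi => div_pos (hηtpos i hi) hZ0
  have hpsum : ∑ i ∈ range n, p i = 1 := by
    simp only [hpdef]
    rw [← Finset.sum_div, ← hZ, div_self hZ0.ne']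
  set s : ℝ := γ / d + 1 / τ with hsdef
  have hs : 0 < s := by positivity
  set b : ℕ → ℝ := fun k => c k + γ / d + 1 / τ - (1 / τ) * Real.log (η₀ k) with hbdef
  set ψ : ℕ → ℝ → ℝ := fun k t =>
    c k * t + (γ / d) * (t * Real.log t) + (1 / τ) * (t * Real.log (t / η₀ k)) with hψdef
  have hFψ : ∀ v : ℕ → ℝ, F v = ∑ k ∈ range n, ψ k (v k) := by
    intro v
    rw [hF, Finset.mul_sum, Finset.mul_sum, ← Finset.sum_add_distrib, ← Finset.sum_add_distrib]
  have hψ_eq : ∀ k < n, ∀ t : ℝ, 0 ≤ t →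
      ψ k t = (c k - (1 / τ) * Real.log (η₀ k)) * t + s * (t * Real.log t) := by
    intro k hk t ht
    rcases eq_or_lt_of_le ht with h | h
    · simp [hψdef, ← h]
    · have : Real.log (t / η₀ k) = Real.log t - Real.log (η₀ k) :=
        Real.log_div h.ne' (hη₀pos k hk).ne'
      simp only [hψdef, this, hsdef]
      ring
  have hψ_bound : ∀ k < n, ∀ u v : ℝ, 0 ≤ u → 0 < v →
      ψ k v - ψ k u ≤ (b k + s * Real.log v) * (v - u) := by
    intro k hk u v hu hv
    rw [hψ_eq k hk u hu, hψ_eq k hk v hv.le]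
    have := mul_le_mul_of_nonneg_left (xlogx_conv u v hu hv) hs.le
    simp only [hbdef, hsdef] at *
    nlinarith [this]
  -- stationarity of the simplex minimizer
  have hstat : ∀ i < n, ∀ j < n, b j + s * Real.log (p j) ≤ b i + s * Real.log (p i) := by
    intro i hi j hj
    rcases eq_or_ne i j with rfl | hij
    · exact le_refl _
    have hpi := hp i hi
    have hpj := hp j hj
    have hεstep : ∀ ε : ℝ, 0 < ε → ε < p j →
        b j + s * Real.log (p j - ε) ≤ b i + s * Real.log (p i + ε) := by
      intro ε hε hεpj
      set x : ℕ → ℝ := fun k => p k + (if k = i then ε else 0) - (if k = j then ε else 0)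
        with hxdef
      have hxi : x i = p i + ε := by simp [hxdef, hij]
      have hxj : x j = p j - ε := by simp [hxdef, Ne.symm hij]
      have hxk : ∀ k, k ≠ i → k ≠ j → x k = p k := by
        intro k h1' h2'; simp [hxdef, h1', h2']
      have hxsum : ∑ k ∈ range n, x k = 1 := by
        have e1 : ∑ k ∈ range n, (if k = i then ε else 0 : ℝ) = ε := by
          rw [Finset.sum_ite_eq' (range n) i (fun _ => ε)]
          simp [mem_range.mpr hi]
        have e2 : ∑ k ∈ range n, (if k = j then ε else 0 : ℝ) = ε := by
          rw [Finset.sum_ite_eq' (range n) j (fun _ => ε)]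
          simp [mem_range.mpr hj]
        simp only [hxdef]
        rw [Finset.sum_sub_distrib, Finset.sum_add_distrib, hpsum, e1, e2]
        ring
      have hxnn : ∀ k < n, 0 ≤ x k := by
        intro k hk
        rcases eq_or_ne k i with rfl | h1'
        · rw [hxi]; linarith [hp k hk]
        rcases eq_or_ne k j with rfl | h2'
        · rw [hxj]; linarith
        · rw [hxk k h1' h2']; exact (hp k hk).le
      have h0 := hunc x hxsum hxnn
      have hdiff : F x - F p = (ψ i (x i) - ψ i (p i)) + (ψ j (x j) - ψ j (p j)) := by
        rw [hFψ, hFψ, ← Finset.sum_sub_distrib]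
        have hsub : ({i, j} : Finset ℕ) ⊆ range n := by
          intro k hk
          simp only [Finset.mem_insert, Finset.mem_singleton] at hk
          rcases hk with rfl | rfl
          · exact mem_range.mpr hi
          · exact mem_range.mpr hj
        rw [← Finset.sum_subset hsub (fun k _hk hk' => ?_)]
        · rw [Finset.sum_pair hij]
        · simp only [Finset.mem_insert, Finset.mem_singleton, not_or] at hk'
          rw [hxk k hk'.1 hk'.2, sub_self]
      have hb1 : ψ i (x i) - ψ i (p i) ≤ (b i + s * Real.log (p i + ε)) * ε := by
        have hbd := hψ_bound i hi (p i) (p i + ε) hpi.le (by linarith)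
        rw [hxi]
        have he : p i + ε - p i = ε := by ring
        rw [he] at hbd
        exact hbd
      have hb2 : ψ j (x j) - ψ j (p j) ≤ (b j + s * Real.log (p j - ε)) * (-ε) := by
        have hbd := hψ_bound j hj (p j) (p j - ε) hpj.le (by linarith)
        rw [hxj]
        have he : p j - ε - p j = -ε := by ring
        rw [he] at hbd
        exact hbd
      have hfge : 0 ≤ (ψ i (x i) - ψ i (p i)) + (ψ j (x j) - ψ j (p j)) := by
        rw [← hdiff]; linarith [h0]
      have hprod : (b j + s * Real.log (p j - ε)) * ε
          ≤ (b i + s * Real.log (p i + ε)) * ε := by nlinarith [hb1, hb2, hfge]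
      exact le_of_mul_le_mul_right hprod hε
    have hlim1 : Filter.Tendsto (fun ε : ℝ => b i + s * Real.log (p i + ε))
        (nhdsWithin 0 (Set.Ioi 0)) (nhds (b i + s * Real.log (p i))) := by
      have hc : ContinuousAt (fun ε : ℝ => b i + s * Real.log (p i + ε)) 0 := by
        apply ContinuousAt.add continuousAt_const
        apply ContinuousAt.mul continuousAt_const
        have hl : ContinuousAt Real.log (p i + 0) :=
          Real.continuousAt_log (by simpa using hpi.ne')
        exact hl.comp (continuousAt_const.add continuousAt_id)
      have ht : Filter.Tendsto (fun ε : ℝ => b i + s * Real.log (p i + ε))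
          (nhdsWithin 0 (Set.Ioi 0)) (nhds (b i + s * Real.log (p i + 0))) :=
        hc.tendsto.mono_left nhdsWithin_le_nhds
      simpa using ht
    have hlim2 : Filter.Tendsto (fun ε : ℝ => b j + s * Real.log (p j - ε))
        (nhdsWithin 0 (Set.Ioi 0)) (nhds (b j + s * Real.log (p j))) := by
      have hc : ContinuousAt (fun ε : ℝ => b j + s * Real.log (p j - ε)) 0 := by
        apply ContinuousAt.add continuousAt_const
        apply ContinuousAt.mul continuousAt_const
        have hl : ContinuousAt Real.log (p j - 0) :=
          Real.continuousAt_log (by simpa using hpj.ne')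
        exact hl.comp (continuousAt_const.sub continuousAt_id)
      have ht : Filter.Tendsto (fun ε : ℝ => b j + s * Real.log (p j - ε))
          (nhdsWithin 0 (Set.Ioi 0)) (nhds (b j + s * Real.log (p j - 0))) :=
        hc.tendsto.mono_left nhdsWithin_le_nhds
      simpa using ht
    have hev : ∀ᶠ ε in nhdsWithin (0:ℝ) (Set.Ioi 0),
        b j + s * Real.log (p j - ε) ≤ b i + s * Real.log (p i + ε) := by
      filter_upwards [Ioo_mem_nhdsGT_of_mem (Set.left_mem_Ico.mpr hpj)] with ε hε
      exact hεstep ε hε.1 hε.2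
    exact le_of_tendsto_of_tendsto hlim2 hlim1 hev
  have hmu : ∀ i < n, b i + s * Real.log (p i) = b 0 + s * Real.log (p 0) := by
    intro i hi
    exact le_antisymm (hstat 0 hn i hi) (hstat i hi 0 hn)
  -- key quantities
  set K : ℝ := 1 + ς istar / Ωm istar with hKdef
  have hΩpos : 0 < Ωm istar := by
    rw [hΩ]
    exact Finset.sum_pos (fun j hj => hp j (lt_of_lt_of_le (mem_range.mp hj) histarn))
      (by simp [histar0.ne'])
  have hK1 : 1 ≤ K := by
    rw [hKdef]
    nlinarith [div_nonneg h1 hΩpos.le]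
  have hK0 : 0 < K := lt_of_lt_of_le one_pos hK1
  -- key inequality: ν ≤ p i * K for istar ≤ i < n
  have hKey : ∀ i, istar ≤ i → i < n → ν ≤ p i * K := by
    intro i hii hin
    have histn : istar < n := lt_of_le_of_lt hii hin
    have hx : 0 < p istar := hp istar histn
    have hstep : p istar * K ≤ p i * K := by
      apply mul_le_mul_of_nonneg_right _ hK0.le
      exact (div_le_div_iff_of_pos_right hZ0).mpr (hsorted istar i hii hin)
    refine le_trans ?_ hstep
    have hΩ' : Ωm (istar + 1) = Ωm istar + p istar := by
      rw [hΩ, hΩ, Finset.sum_range_succ]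
    have hς2 : ς istar = (p istar - ν) + ς (istar + 1) := by
      rw [hς, hς, Finset.sum_eq_sum_Ico_succ_bot histn]
    by_cases hc : 0 ≤ ς (istar + 1)
    · have hnb := hlargest (istar + 1) (by omega) (by omega)
      push_neg at hnb
      have hnb2 := hnb hc
      simp only [Nat.add_sub_cancel] at hnb2
      have hΩ'pos : 0 < Ωm (istar + 1) := by rw [hΩ']; linarith
      have h5 : ν * Ωm (istar + 1) ≤ p istar * (Ωm (istar + 1) + ς (istar + 1)) := by
        have he : (ηt istar / Z) * (1 + ς (istar + 1) / Ωm (istar + 1))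
            = p istar * (Ωm (istar + 1) + ς (istar + 1)) / Ωm (istar + 1) := by
          simp only [hpdef]
          field_simp
        rw [he] at hnb2
        exact (le_div_iff₀ hΩ'pos).mp hnb2
      have hς3 : ς (istar + 1) = ς istar - p istar + ν := by linarith
      rw [hΩ', hς3] at h5
      have hgoal : ν * Ωm istar ≤ p istar * (Ωm istar + ς istar) := by nlinarith [h5]
      have he2 : p istar * K = p istar * (Ωm istar + ς istar) / Ωm istar := by
        rw [hKdef]; field_simp
      rw [he2]
      exact (le_div_iff₀ hΩpos).mpr hgoal
    · push_neg at hc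
      nlinarith [hx, hK1, hς2, h1, hc]
  -- feasibility
  have hfeas : ∀ i < n, 0 ≤ η i ∧ η i ≤ ν := by
    intro i hi
    rw [hη i]
    by_cases h : istar ≤ i
    · simp [h, hν0.le]
    · push_neg at h
      simp only [if_neg (not_le.mpr h)]
      constructor
      · exact mul_nonneg (hp i hi).le hK0.le
      · calc p i * K ≤ p (istar - 1) * K := by
              apply mul_le_mul_of_nonneg_right _ hK0.le
              exact (div_le_div_iff_of_pos_right hZ0).mpr (hsorted i (istar - 1) (by omega) (by omega))
            _ ≤ ν := h2.le
  have hηpos : ∀ i < n, 0 < η i := by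
    intro i hi
    rw [hη i]
    by_cases h : istar ≤ i
    · simp [h, hν0]
    · simp only [if_neg h]
      exact mul_pos (hp i hi) hK0
  -- sum
  have hsplit : range n = range istar ∪ Ico istar n := by
    rw [Finset.range_eq_Ico, Finset.range_eq_Ico]
    rw [Finset.Ico_union_Ico_eq_Ico (Nat.zero_le _) histarn]
  have hdisj : Disjoint (range istar) (Ico istar n) := by
    rw [Finset.range_eq_Ico]
    exact Finset.Ico_disjoint_Ico_consecutive 0 istar n
  have hpsum2 : ∑ j ∈ Ico istar n, p j = 1 - Ωm istar := by
    have h := hpsum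
    rw [hsplit, Finset.sum_union hdisj] at h
    have h2 : Ωm istar = ∑ j ∈ range istar, p j := hΩ istar
    linarith
  have hcard : ∑ _j ∈ Ico istar n, ν = ν * (n - istar) := by
    rw [Finset.sum_const, Nat.card_Ico]
    rw [nsmul_eq_mul, Nat.cast_sub histarn]
    ring
  have hςval : ς istar = (1 - Ωm istar) - ν * (n - istar) := by
    rw [hς, Finset.sum_sub_distrib, hcard]
    have : ∑ j ∈ Ico istar n, ηt j / Z = ∑ j ∈ Ico istar n, p j := rfl
    rw [this, hpsum2]
  have hsum : ∑ i ∈ range n, η i = 1 := by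
    rw [hsplit, Finset.sum_union hdisj]
    have e1 : ∑ i ∈ range istar, η i = K * Ωm istar := by
      rw [hΩ, Finset.mul_sum]
      apply Finset.sum_congr rfl
      intro i hi
      rw [hη i, if_neg (by simp at hi; omega)]
      ring
    have e2 : ∑ i ∈ Ico istar n, η i = ν * (n - istar) := by
      rw [Finset.sum_congr rfl (fun i hi => by
        rw [hη i, if_pos (Finset.mem_Ico.mp hi).1])]
      rw [Finset.sum_const, Nat.card_Ico, nsmul_eq_mul, Nat.cast_sub histarn]
      ring
    rw [e1, e2]
    have : K * Ωm istar = Ωm istar + ς istar := by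
      rw [hKdef, add_mul, one_mul, div_mul_cancel₀ _ hΩpos.ne']
    rw [this, hςval]
    ring
  -- KKT multipliers
  set μ : ℝ := b 0 + s * Real.log (p 0) with hμdef
  set lam : ℝ := -μ - s * Real.log K with hlamdef
  set α : ℕ → ℝ := fun i => -(b i + s * Real.log (η i)) - lam with hαdef
  have hstat_eq : ∀ i < n, c i + (γ / d) * (Real.log (η i) + 1)
      + (1 / τ) * (Real.log (η i / η₀ i) + 1) = b i + s * Real.log (η i) := by
    intro i hi
    have hlog : Real.log (η i / η₀ i) = Real.log (η i) - Real.log (η₀ i) :=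
      Real.log_div (hηpos i hi).ne' (hη₀pos i hi).ne'
    rw [hlog]
    simp only [hbdef, hsdef]
    ring
  have hαzero : ∀ i < n, i < istar → α i = 0 := by
    intro i hi hii
    have hηi : η i = p i * K := by rw [hη i, if_neg (by omega)]
    have : Real.log (η i) = Real.log (p i) + Real.log K := by
      rw [hηi, Real.log_mul (hp i hi).ne' hK0.ne']
    simp only [hαdef, this, hlamdef]
    have := hmu i hi
    simp only [hμdef] at this ⊢
    linarith [this]
    -- need: -(b i + s*(log p i + log K)) - (-μ - s log K) = 0
  have hαval : ∀ i < n, istar ≤ i → α i = s * (Real.log (p i * K) - Real.log ν) := by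
    intro i hi hii
    have hηi : η i = ν := by rw [hη i, if_pos hii]
    have hlogm : Real.log (p i * K) = Real.log (p i) + Real.log K :=
      Real.log_mul (hp i hi).ne' hK0.ne'
    simp only [hαdef, hηi, hlamdef, hlogm]
    have := hmu i hi
    simp only [hμdef] at this ⊢
    linarith [this]
  have hαnonneg : ∀ i < n, 0 ≤ α i := by
    intro i hi
    by_cases h : istar ≤ i
    · rw [hαval i hi h]
      apply mul_nonneg hs.le
      rw [sub_nonneg]
      exact Real.log_le_log hν0 (hKey i h hi)
    · rw [hαzero i hi (by omega)]
  have hcs : ∀ i < n, α i * (η i - ν) = 0 := by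
    intro i hi
    by_cases h : istar ≤ i
    · rw [hη i, if_pos h]; ring
    · rw [hαzero i hi (by omega)]; ring
  have hkkt : ∀ i < n, c i + (γ / d) * (Real.log (η i) + 1)
      + (1 / τ) * (Real.log (η i / η₀ i) + 1) + lam + α i = 0 := by
    intro i hi
    rw [hstat_eq i hi]
    simp only [hαdef]
    ring
  -- optimality of η
  have hopt : ∀ x : ℕ → ℝ, (∑ i ∈ range n, x i = 1) → (∀ i < n, 0 ≤ x i ∧ x i ≤ ν) →
      F η ≤ F x := by
    intro x hxsum hxfeas
    have hterm : ∀ k ∈ range n,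
        -lam * x k + lam * η k - α k * (x k - ν) ≤ ψ k (x k) - ψ k (η k) := by
      intro k hk
      have hk' := mem_range.mp hk
      have hb := hψ_bound k hk' (x k) (η k) (hxfeas k hk').1 (hηpos k hk')
      have hba : b k + s * Real.log (η k) = -lam - α k := by
        simp only [hαdef]; ring
      rw [hba] at hb
      have hcs' := hcs k hk'
      nlinarith [hb, hcs']
    have hsum1 : ∑ k ∈ range n, (-lam * x k + lam * η k - α k * (x k - ν))
        ≤ F x - F η := by
      rw [hFψ, hFψ, ← Finset.sum_sub_distrib]
      exact Finset.sum_le_sum hterm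
    have e1 : ∑ k ∈ range n, -lam * x k = -lam := by
      rw [← Finset.mul_sum, hxsum, mul_one]
    have e2 : ∑ k ∈ range n, lam * η k = lam := by
      rw [← Finset.mul_sum, hsum, mul_one]
    have e3 : (0:ℝ) ≤ ∑ k ∈ range n, -(α k * (x k - ν)) := by
      apply Finset.sum_nonneg
      intro k hk
      have hk' := mem_range.mp hk
      nlinarith [hαnonneg k hk', (hxfeas k hk').2]
    rw [Finset.sum_sub_distrib, Finset.sum_add_distrib, e1, e2] at hsum1
    rw [Finset.sum_neg_distrib] at e3
    linarith
  -- η equals ηstar on range n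
  have hFeq : F η = F ηstar :=
    le_antisymm (hopt ηstar hηstarD.1 hηstarD.2) (hηstarmin η hsum hfeas)
  have hequal : ∀ i < n, η i = ηstar i := by
    intro i hi
    by_contra hne
    have hneq : η ≠ ηstar := fun h => hne (by rw [h])
    have hmem1 : η ∈ {η : ℕ → ℝ | (∑ i ∈ range n, η i = 1) ∧ ∀ i < n, 0 ≤ η i ∧ η i ≤ ν} :=
      ⟨hsum, hfeas⟩
    have hmem2 : ηstar ∈ {η : ℕ → ℝ | (∑ i ∈ range n, η i = 1) ∧ ∀ i < n, 0 ≤ η i ∧ η i ≤ ν} :=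
      ⟨hηstarD.1, hηstarD.2⟩
    have hstrict := hFstrict.2 hmem1 hmem2 hneq (one_half_pos (α := ℝ))
      (one_half_pos (α := ℝ)) (by norm_num)
    set z : ℕ → ℝ := ((1:ℝ)/2 : ℝ) • η + ((1:ℝ)/2 : ℝ) • ηstar with hzdef
    have hzsum : ∑ i ∈ range n, z i = 1 := by
      simp only [hzdef, Pi.add_apply, Pi.smul_apply, smul_eq_mul]
      rw [Finset.sum_add_distrib, ← Finset.mul_sum, ← Finset.mul_sum, hsum, hηstarD.1]
      norm_num
    have hzfeas : ∀ i < n, 0 ≤ z i ∧ z i ≤ ν := by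
      intro i hi
      simp only [hzdef, Pi.add_apply, Pi.smul_apply, smul_eq_mul]
      obtain ⟨ha, hb'⟩ := hfeas i hi
      obtain ⟨hc', hd'⟩ := hηstarD.2 i hi
      constructor <;> linarith
    have hzmin := hηstarmin z hzsum hzfeas
    rw [hFeq] at hstrict
    have hlt : F z < F ηstar := by
      refine lt_of_lt_of_le hstrict (le_of_eq ?_)
      simp only [smul_eq_mul]
      ring
    exact absurd (lt_of_le_of_lt hzmin hlt) (lt_irrefl _)
  exact ⟨hfeas, hsum, ⟨lam, α, hαnonneg, hcs, hkkt⟩, hequal⟩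
end
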